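/- Let P₁, P₂ and Q be finite posets and K a field. If J_{P₁,Q} is generated by quadratic binomials and J_{P₂,Q} is generated by quadratic binomials, then J_{P₁+P₂,Q} is generated by quadratic binomials, where P₁ + P₂ is the disjoint sum of P₁ and P₂. -/

import Mathlib

open MvPolynomial

/-- The `K`-algebra map sending the variable `t_φ` (indexed by an isotone map
`φ : P →o Q`) to the monomial `∏_{p ∈ P} x_{p, φ(p)}`. -/
noncomputable def isotonianMap (K P Q : Type) [Field K] [PartialOrder P] [Fintype P]
    [PartialOrder Q] [Fintype Q] :
    MvPolynomial (P →o Q) K →ₐ[K] MvPolynomial (P × Q) K :=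
  aeval fun φ : P →o Q => ∏ p : P, X (p, φ p)

/-- The defining ideal `J_{P,Q}` of the isotonian algebra `K[P,Q]`. -/
noncomputable def isotonianIdeal (K P Q : Type) [Field K] [PartialOrder P] [Fintype P]
    [PartialOrder Q] [Fintype Q] :
    Ideal (MvPolynomial (P →o Q) K) :=
  RingHom.ker (isotonianMap K P Q)

/-- A binomial `monomial u 1 - monomial v 1` which is quadratic: both monomials have degree 2. -/
def IsQuadraticBinomial {σ K : Type} [Field K] (f : MvPolynomial σ K) : Prop :=
  ∃ u v : σ →₀ ℕ, (u.sum fun _ e => e) = 2 ∧ (v.sum fun _ e => e) = 2 ∧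
    f = monomial u 1 - monomial v 1

namespace Stmt10

variable {K : Type} [Field K] {σ τ : Type}

/-! ### Generic monomial-map machinery -/

noncomputable def A (w : σ → (τ →₀ ℕ)) : (σ →₀ ℕ) →+ (τ →₀ ℕ) :=
  Finsupp.liftAddHom fun s => (smulAddHom ℕ (τ →₀ ℕ)).flip (w s)

lemma A_single (w : σ → (τ →₀ ℕ)) (s : σ) (n : ℕ) :
    A w (Finsupp.single s n) = n • w s := by
  simp [A]

noncomputable def Phi (w : σ → (τ →₀ ℕ)) :
    MvPolynomial σ K →ₐ[K] MvPolynomial τ K :=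
  aeval fun s => monomial (w s) 1

lemma prod_monomial (w : σ → (τ →₀ ℕ)) (a : σ →₀ ℕ) :
    (a.prod fun s k => monomial (k • w s) (1 : K)) = monomial (A w a) 1 := by
  induction a using Finsupp.induction with
  | zero => simp
  | single_add s n f hs hn ih =>
    rw [Finsupp.prod_add_index' (by intro a; simp) (by
      intro a b₁ b₂
      rw [add_smul, monomial_mul, one_mul]),
      Finsupp.prod_single_index (by simp), ih, map_add, A_single, monomial_mul, one_mul]

lemma Phi_monomial (w : σ → (τ →₀ ℕ)) (a : σ →₀ ℕ) (r : K) :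
    Phi w (monomial a r) = monomial (A w a) r := by
  rw [Phi, aeval_monomial, algebraMap_eq]
  simp_rw [monomial_pow, one_pow]
  rw [prod_monomial, C_mul_monomial, mul_one]

/-- fiber binomials -/
def FB (K : Type) [Field K] (w : σ → (τ →₀ ℕ)) : Set (MvPolynomial σ K) :=
  {f | ∃ a b, A w a = A w b ∧ f = monomial a 1 - monomial b 1}

/-- quadratic fiber binomials -/
def QB (K : Type) [Field K] (w : σ → (τ →₀ ℕ)) : Set (MvPolynomial σ K) :=
  {f | ∃ u v, (u.sum fun _ e => e) = 2 ∧ (v.sum fun _ e => e) = 2 ∧ A w u = A w v ∧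
    f = monomial u 1 - monomial v 1}

/-- one quadratic move on exponent vectors -/
def MoveF (w : σ → (τ →₀ ℕ)) (a b : σ →₀ ℕ) : Prop :=
  ∃ c u v, (u.sum fun _ e => e) = 2 ∧ (v.sum fun _ e => e) = 2 ∧ A w u = A w v ∧
    a = c + u ∧ b = c + v

def Con (w : σ → (τ →₀ ℕ)) : (σ →₀ ℕ) → (σ →₀ ℕ) → Prop :=
  Relation.ReflTransGen (MoveF w)

lemma MoveF.symm {w : σ → (τ →₀ ℕ)} : Symmetric (MoveF w) := by
  rintro a b ⟨c, u, v, hu, hv, hA, ha, hb⟩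
  exact ⟨c, v, u, hv, hu, hA.symm, hb, ha⟩

lemma Con.symm {w : σ → (τ →₀ ℕ)} {a b : σ →₀ ℕ} (h : Con w a b) : Con w b a :=
  (@Relation.ReflTransGen.symmetric _ (MoveF w) ⟨fun _ _ h => MoveF.symm h⟩).symm _ _ h

lemma MoveF.add {w : σ → (τ →₀ ℕ)} {a b : σ →₀ ℕ} (d : σ →₀ ℕ) (h : MoveF w a b) :
    MoveF w (d + a) (d + b) := by
  obtain ⟨c, u, v, hu, hv, hA, ha, hb⟩ := h
  exact ⟨d + c, u, v, hu, hv, hA, by rw [ha, add_assoc], by rw [hb, add_assoc]⟩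

/-- move binomials -/
def MB (K : Type) [Field K] (w : σ → (τ →₀ ℕ)) : Set (MvPolynomial σ K) :=
  {f | ∃ a b, MoveF w a b ∧ f = monomial a 1 - monomial b 1}

lemma mul_mem_spanMB (w : σ → (τ →₀ ℕ)) (r x : MvPolynomial σ K)
    (hx : x ∈ Submodule.span K (MB K w)) : r * x ∈ Submodule.span K (MB K w) := by
  induction r using MvPolynomial.induction_on' with
  | add p q hp hq => rw [add_mul]; exact Submodule.add_mem _ hp hq
  | monomial d r =>
    induction hx using Submodule.span_induction with
    | mem f hf =>
      obtain ⟨a, b, hab, rfl⟩ := hf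
      have : (monomial d r) * (monomial a 1 - monomial b 1)
          = r • ((monomial (d + a) 1 : MvPolynomial σ K) - monomial (d + b) 1) := by
        rw [mul_sub, monomial_mul, monomial_mul, smul_sub]
        simp [smul_monomial]
      rw [this]
      exact Submodule.smul_mem _ _ (Submodule.subset_span ⟨d + a, d + b, hab.add d, rfl⟩)
    | zero => rw [mul_zero]; exact Submodule.zero_mem _
    | add f g _ _ hf hg => rw [mul_add]; exact Submodule.add_mem _ hf hg
    | smul c f _ hf => rw [mul_smul_comm]; exact Submodule.smul_mem _ _ hf

lemma spanQB_le_spanMB (w : σ → (τ →₀ ℕ)) (p : MvPolynomial σ K)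
    (hp : p ∈ Ideal.span (QB K w)) : p ∈ Submodule.span K (MB K w) := by
  induction hp using Submodule.span_induction with
  | mem f hf =>
    obtain ⟨u, v, hu, hv, hA, rfl⟩ := hf
    exact Submodule.subset_span ⟨u, v, ⟨0, u, v, hu, hv, hA, (zero_add u).symm,
      (zero_add v).symm⟩, rfl⟩
  | zero => exact Submodule.zero_mem _
  | add f g _ _ hf hg => exact Submodule.add_mem _ hf hg
  | smul c f _ hf => rw [smul_eq_mul]; exact mul_mem_spanMB w c f hf

/-- connectivity implies membership in the ideal of quadratic binomials -/
lemma con_mem_spanQB (w : σ → (τ →₀ ℕ)) {a b : σ →₀ ℕ} (h : Con w a b) :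
    (monomial a 1 - monomial b 1 : MvPolynomial σ K) ∈ Ideal.span (QB K w) := by
  induction h with
  | refl => simp
  | @tail b' c' hab hbc ih =>
    obtain ⟨c, u, v, hu, hv, hA, hb', hc'⟩ := hbc
    have key : (monomial b' 1 - monomial c' 1 : MvPolynomial σ K)
        = monomial c 1 * (monomial u 1 - monomial v 1) := by
      rw [mul_sub, monomial_mul, monomial_mul, one_mul, hb', hc']
    have h2 : (monomial b' 1 - monomial c' 1 : MvPolynomial σ K) ∈ Ideal.span (QB K w) := by
      rw [key]
      exact Ideal.mul_mem_left _ _ (Ideal.subset_span ⟨u, v, hu, hv, hA, rfl⟩)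
    have := Ideal.add_mem _ ih h2
    simpa using this

/-- membership in the ideal of quadratic binomials implies connectivity -/
lemma spanQB_con (w : σ → (τ →₀ ℕ)) {a b : σ →₀ ℕ}
    (h : (monomial a 1 - monomial b 1 : MvPolynomial σ K) ∈ Ideal.span (QB K w)) :
    Con w a b := by
  by_cases hab : a = b
  · subst hab; exact Relation.ReflTransGen.refl
  set s : Setoid (σ →₀ ℕ) := ⟨Con w, ⟨fun _ => Relation.ReflTransGen.refl,
    Con.symm, Relation.ReflTransGen.trans⟩⟩ with hs
  classical
  let ℓ : MvPolynomial σ K →ₗ[K] (Quotient s →₀ K) :=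
    (MvPolynomial.basisMonomials σ K).constr K
      (fun a => Finsupp.single (Quotient.mk s a) (1 : K))
  have hℓ : ∀ e : σ →₀ ℕ, ℓ (monomial e 1) = Finsupp.single (Quotient.mk s e) 1 := by
    intro e
    have : (monomial e 1 : MvPolynomial σ K) = MvPolynomial.basisMonomials σ K e := by
      simp [MvPolynomial.coe_basisMonomials]
    rw [this, Module.Basis.constr_basis]
  have hvan0 : ∀ p, p ∈ Submodule.span K (MB K w) → ℓ p = 0 := by
    intro p hp
    induction hp using Submodule.span_induction with
    | mem f hf =>
      obtain ⟨a', b', hab', rfl⟩ := hf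
      rw [map_sub, hℓ, hℓ]
      have : Quotient.mk s a' = Quotient.mk s b' :=
        Quotient.sound (Relation.ReflTransGen.single hab')
      rw [this, sub_self]
    | zero => exact map_zero _
    | add f g _ _ hf hg => rw [map_add, hf, hg, add_zero]
    | smul c f _ hf => rw [map_smul, hf, smul_zero]
  have hvan := hvan0 _ (spanQB_le_spanMB w _ h)
  rw [map_sub, hℓ, hℓ, sub_eq_zero] at hvan
  have : Quotient.mk s a = Quotient.mk s b := by
    by_contra hne
    have := DFunLike.congr_fun hvan (Quotient.mk s a)
    rw [Finsupp.single_eq_same, Finsupp.single_eq_of_ne' (Ne.symm hne)] at this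
    exact one_ne_zero this
  exact Quotient.exact this

/-! ### The kernel is spanned by fiber binomials -/

lemma ker_le_spanFB (w : σ → (τ →₀ ℕ)) :
    ∀ (n : ℕ) (p : MvPolynomial σ K), p.support.card = n → Phi w p = 0 →
      p ∈ Submodule.span K (FB K w) := by
  classical
  intro n
  induction n using Nat.strong_induction_on with
  | _ n ih =>
  intro p hcard hker
  rcases Nat.eq_zero_or_pos n with hn | hn
  · have : p = 0 := by
      rw [← MvPolynomial.support_eq_empty, ← Finset.card_eq_zero, hcard, hn]
    rw [this]; exact Submodule.zero_mem _
  · have hne : p.support.Nonempty := by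
      rw [← Finset.card_pos, hcard]; exact hn
    obtain ⟨a₀, ha₀⟩ := hne
    set S : Finset (σ →₀ ℕ) := p.support.filter (fun a => A w a = A w a₀) with hS
    have ha₀S : a₀ ∈ S := Finset.mem_filter.mpr ⟨ha₀, rfl⟩
    have hPhi : Phi w p = ∑ a ∈ p.support, monomial (A w a) (coeff a p) := by
      conv_lhs => rw [p.as_sum]
      rw [map_sum]
      exact Finset.sum_congr rfl fun a _ => Phi_monomial w a (coeff a p)
    have hsum : ∑ a ∈ S, coeff a p = 0 := by
      have h0 : coeff (A w a₀) (Phi w p) = 0 := by rw [hker]; simp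
      rw [hPhi, coeff_sum] at h0
      have heq : ∑ a ∈ p.support, coeff (A w a₀) (monomial (A w a) (coeff a p))
          = ∑ a ∈ S, coeff a p := by
        rw [hS, Finset.sum_filter]
        exact Finset.sum_congr rfl fun a _ => by rw [coeff_monomial]
      rw [← heq]; exact h0
    set g : MvPolynomial σ K := ∑ a ∈ S, monomial a (coeff a p) with hg
    have hgspan : g ∈ Submodule.span K (FB K w) := by
      have hrepr : ∑ a ∈ S, (coeff a p) •
          ((monomial a 1 : MvPolynomial σ K) - monomial a₀ 1) = g := by
        rw [hg]
        rw [Finset.sum_congr rfl fun a _ =>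
          smul_sub (coeff a p) ((monomial a 1 : MvPolynomial σ K)) (monomial a₀ 1)]
        rw [Finset.sum_sub_distrib]
        simp only [smul_monomial, smul_eq_mul, mul_one]
        rw [← map_sum (monomial a₀) (fun x => coeff x p) S, hsum, map_zero, sub_zero]
      rw [← hrepr]
      refine Submodule.sum_mem _ fun a ha => Submodule.smul_mem _ _ (Submodule.subset_span ?_)
      exact ⟨a, a₀, (Finset.mem_filter.mp ha).2, rfl⟩
    have hgker : Phi w g = 0 := by
      rw [hg, map_sum]
      have : ∀ a ∈ S, Phi w (monomial a (coeff a p)) = monomial (A w a₀) (coeff a p) := by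
        intro a ha
        rw [Phi_monomial, (Finset.mem_filter.mp ha).2]
      rw [Finset.sum_congr rfl this, ← map_sum (monomial (A w a₀)), hsum, map_zero]
    set p' : MvPolynomial σ K := p - g with hp'
    have hp'coeff : ∀ b, coeff b p' = if b ∈ S then 0 else coeff b p := by
      intro b
      have hcg : coeff b g = if b ∈ S then coeff b p else 0 := by
        rw [hg, coeff_sum]
        rw [Finset.sum_congr rfl (fun a _ => coeff_monomial b a (coeff a p))]
        exact Finset.sum_ite_eq' S b fun a => coeff a p
      rw [hp', coeff_sub, hcg]
      by_cases hb : b ∈ S <;> simp [hb]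
    have hsupp : p'.support ⊆ p.support.erase a₀ := by
      intro b hb
      rw [MvPolynomial.mem_support_iff, hp'coeff] at hb
      by_cases hbS : b ∈ S
      · simp [hbS] at hb
      · rw [if_neg hbS] at hb
        refine Finset.mem_erase.mpr ⟨?_, MvPolynomial.mem_support_iff.mpr hb⟩
        rintro rfl; exact hbS ha₀S
    have hlt : p'.support.card < n := by
      calc p'.support.card ≤ (p.support.erase a₀).card := Finset.card_le_card hsupp
        _ < p.support.card := Finset.card_erase_lt_of_mem ha₀
        _ = n := hcard
    have hp'ker : Phi w p' = 0 := by
      rw [hp', map_sub, hker, hgker, sub_zero]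
    have hmem := ih _ hlt p' rfl hp'ker
    have : p = p' + g := by rw [hp']; ring
    rw [this]
    exact Submodule.add_mem _ hmem hgspan

/-! ### Multiset combinatorics -/

section Comb
variable {α β N₁ N₂ : Type} [AddCommMonoid N₁] [AddCommMonoid N₂]

def Move1 (w₁ : α → N₁) (m m' : Multiset α) : Prop :=
  ∃ (C : Multiset α) (x y x' y' : α), w₁ x + w₁ y = w₁ x' + w₁ y' ∧
    m = x ::ₘ y ::ₘ C ∧ m' = x' ::ₘ y' ::ₘ C

def MoveP (w₁ : α → N₁) (w₂ : β → N₂) (S T : Multiset (α × β)) : Prop :=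
  ∃ (C : Multiset (α × β)) (x y x' y' : α × β),
    w₁ x.1 + w₁ y.1 = w₁ x'.1 + w₁ y'.1 ∧ w₂ x.2 + w₂ y.2 = w₂ x'.2 + w₂ y'.2 ∧
    S = x ::ₘ y ::ₘ C ∧ T = x' ::ₘ y' ::ₘ C

variable {w₁ : α → N₁} {w₂ : β → N₂}

lemma MoveP.symm' : Symmetric (MoveP w₁ w₂) := by
  rintro S T ⟨C, x, y, x', y', h1, h2, hS, hT⟩
  exact ⟨C, x', y', x, y, h1.symm, h2.symm, hT, hS⟩

lemma MoveP.cons (z : α × β) {S T : Multiset (α × β)} (h : MoveP w₁ w₂ S T) :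
    MoveP w₁ w₂ (z ::ₘ S) (z ::ₘ T) := by
  obtain ⟨C, x, y, x', y', h1, h2, hS, hT⟩ := h
  refine ⟨z ::ₘ C, x, y, x', y', h1, h2, ?_, ?_⟩
  · rw [hS, Multiset.cons_swap z x, Multiset.cons_swap z y]
  · rw [hT, Multiset.cons_swap z x', Multiset.cons_swap z y']

lemma ConP.cons (z : α × β) {S T : Multiset (α × β)}
    (h : Relation.ReflTransGen (MoveP w₁ w₂) S T) :
    Relation.ReflTransGen (MoveP w₁ w₂) (z ::ₘ S) (z ::ₘ T) :=
  Relation.ReflTransGen.lift (z ::ₘ ·) (fun _ _ h => MoveP.cons z h) _ _ h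

lemma stepA : ∀ (n : ℕ) (S T : Multiset (α × β)), Multiset.card S = n →
    S.map Prod.fst = T.map Prod.fst → S.map Prod.snd = T.map Prod.snd →
    Relation.ReflTransGen (MoveP w₁ w₂) S T := by
  intro n
  induction n with
  | zero =>
    intro S T hc h1 _
    have hS : S = 0 := Multiset.card_eq_zero.mp hc
    have hT0 : T.map Prod.fst = 0 := by rw [← h1, hS]; simp
    have hT : T = 0 := by simpa using hT0
    rw [hS, hT]
  | succ n ih =>
    intro S T hc h1 h2
    obtain ⟨z, hz⟩ := Multiset.card_pos_iff_exists_mem.mp (by rw [hc]; exact Nat.succ_pos n)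
    obtain ⟨S', rfl⟩ := Multiset.exists_cons_of_mem hz
    have hz1 : z.1 ∈ T.map Prod.fst := by rw [← h1]; simp
    obtain ⟨z', hz'T, hz'1⟩ := Multiset.mem_map.mp hz1
    by_cases hsnd : z'.2 = z.2
    · have hzz : z' = z := Prod.ext hz'1 hsnd
      subst hzz
      obtain ⟨T', rfl⟩ := Multiset.exists_cons_of_mem hz'T
      rw [Multiset.map_cons, Multiset.map_cons] at h1 h2
      have h1' := (Multiset.cons_inj_right _).mp h1
      have h2' := (Multiset.cons_inj_right _).mp h2
      exact ConP.cons z' (ih S' T' (by simpa using hc) h1' h2')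
    · have hz2 : z.2 ∈ T.map Prod.snd := by rw [← h2]; simp
      obtain ⟨z'', hz''T, hz''2⟩ := Multiset.mem_map.mp hz2
      have hne : z'' ≠ z' := fun h => hsnd (by rw [← h, hz''2])
      obtain ⟨T₁, rfl⟩ := Multiset.exists_cons_of_mem hz'T
      have hz''T₁ : z'' ∈ T₁ := by
        rcases Multiset.mem_cons.mp hz''T with h | h
        · exact absurd h hne
        · exact h
      obtain ⟨T₂, rfl⟩ := Multiset.exists_cons_of_mem hz''T₁
      have hmove : MoveP w₁ w₂ (z' ::ₘ z'' ::ₘ T₂) ((z.1, z.2) ::ₘ (z''.1, z'.2) ::ₘ T₂) := by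
        refine ⟨T₂, z', z'', (z.1, z.2), (z''.1, z'.2), ?_, ?_, rfl, rfl⟩
        · rw [hz'1]
        · rw [hz''2]; exact add_comm _ _
      have h1' : S'.map Prod.fst = ((z''.1, z'.2) ::ₘ T₂).map Prod.fst := by
        rw [Multiset.map_cons, Multiset.map_cons, Multiset.map_cons, hz'1] at h1
        have := (Multiset.cons_inj_right _).mp h1
        rw [Multiset.map_cons]
        exact this
      have h2' : S'.map Prod.snd = ((z''.1, z'.2) ::ₘ T₂).map Prod.snd := by
        rw [Multiset.map_cons, Multiset.map_cons, Multiset.map_cons, hz''2,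
          Multiset.cons_swap] at h2
        have := (Multiset.cons_inj_right _).mp h2
        rw [Multiset.map_cons]
        exact this
      have hrec := ih S' ((z''.1, z'.2) ::ₘ T₂) (by simpa using hc) h1' h2'
      have hcons := ConP.cons (w₁ := w₁) (w₂ := w₂) z hrec
      have : (z.1, z.2) = z := rfl
      rw [this] at hmove
      exact hcons.trans (Relation.ReflTransGen.single (MoveP.symm' hmove))

lemma stepB1 : ∀ {m m' : Multiset α}, Relation.ReflTransGen (Move1 w₁) m m' →
    ∀ S : Multiset (α × β), S.map Prod.fst = m →
    ∃ S', Relation.ReflTransGen (MoveP w₁ w₂) S S' ∧ S'.map Prod.fst = m' ∧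
      S'.map Prod.snd = S.map Prod.snd := by
  intro m m' h
  induction h with
  | refl => exact fun S hS => ⟨S, .refl, hS, rfl⟩
  | @tail b c hab hbc ih =>
    intro S hS
    obtain ⟨S', hcon, hfst, hsnd⟩ := ih S hS
    obtain ⟨C, x, y, x', y', hw, hb, hc⟩ := hbc
    have hx : x ∈ S'.map Prod.fst := by rw [hfst, hb]; simp
    obtain ⟨z₁, hz₁S, hz₁⟩ := Multiset.mem_map.mp hx
    obtain ⟨R, rfl⟩ := Multiset.exists_cons_of_mem hz₁S
    have hR : R.map Prod.fst = y ::ₘ C := by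
      rw [Multiset.map_cons, hb, hz₁] at hfst
      exact (Multiset.cons_inj_right _).mp hfst
    have hy : y ∈ R.map Prod.fst := by rw [hR]; simp
    obtain ⟨z₂, hz₂R, hz₂⟩ := Multiset.mem_map.mp hy
    obtain ⟨R₂, rfl⟩ := Multiset.exists_cons_of_mem hz₂R
    have hR₂ : R₂.map Prod.fst = C := by
      rw [Multiset.map_cons, hz₂] at hR
      exact (Multiset.cons_inj_right _).mp hR
    refine ⟨(x', z₁.2) ::ₘ (y', z₂.2) ::ₘ R₂, ?_, ?_, ?_⟩
    · refine hcon.trans (Relation.ReflTransGen.single ?_)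
      exact ⟨R₂, z₁, z₂, (x', z₁.2), (y', z₂.2), by rw [hz₁, hz₂]; exact hw, rfl, rfl, rfl⟩
    · rw [hc]
      simp [hR₂]
    · rw [← hsnd]
      simp

lemma stepB2 : ∀ {m m' : Multiset β}, Relation.ReflTransGen (Move1 w₂) m m' →
    ∀ S : Multiset (α × β), S.map Prod.snd = m →
    ∃ S', Relation.ReflTransGen (MoveP w₁ w₂) S S' ∧ S'.map Prod.snd = m' ∧
      S'.map Prod.fst = S.map Prod.fst := by
  intro m m' h
  induction h with
  | refl => exact fun S hS => ⟨S, .refl, hS, rfl⟩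
  | @tail b c hab hbc ih =>
    intro S hS
    obtain ⟨S', hcon, hsnd, hfst⟩ := ih S hS
    obtain ⟨C, x, y, x', y', hw, hb, hc⟩ := hbc
    have hx : x ∈ S'.map Prod.snd := by rw [hsnd, hb]; simp
    obtain ⟨z₁, hz₁S, hz₁⟩ := Multiset.mem_map.mp hx
    obtain ⟨R, rfl⟩ := Multiset.exists_cons_of_mem hz₁S
    have hR : R.map Prod.snd = y ::ₘ C := by
      rw [Multiset.map_cons, hb, hz₁] at hsnd
      exact (Multiset.cons_inj_right _).mp hsnd
    have hy : y ∈ R.map Prod.snd := by rw [hR]; simp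
    obtain ⟨z₂, hz₂R, hz₂⟩ := Multiset.mem_map.mp hy
    obtain ⟨R₂, rfl⟩ := Multiset.exists_cons_of_mem hz₂R
    have hR₂ : R₂.map Prod.snd = C := by
      rw [Multiset.map_cons, hz₂] at hR
      exact (Multiset.cons_inj_right _).mp hR
    refine ⟨(z₁.1, x') ::ₘ (z₂.1, y') ::ₘ R₂, ?_, ?_, ?_⟩
    · refine hcon.trans (Relation.ReflTransGen.single ?_)
      exact ⟨R₂, z₁, z₂, (z₁.1, x'), (z₂.1, y'), rfl, by rw [hz₁, hz₂]; exact hw, rfl, rfl⟩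
    · rw [hc]
      simp [hR₂]
    · rw [← hfst]
      simp

theorem mainComb
    (H1 : ∀ m m' : Multiset α, (m.map w₁).sum = (m'.map w₁).sum →
      Relation.ReflTransGen (Move1 w₁) m m')
    (H2 : ∀ m m' : Multiset β, (m.map w₂).sum = (m'.map w₂).sum →
      Relation.ReflTransGen (Move1 w₂) m m')
    (S T : Multiset (α × β))
    (hA1 : ((S.map fun z => w₁ z.1).sum) = ((T.map fun z => w₁ z.1).sum))
    (hA2 : ((S.map fun z => w₂ z.2).sum) = ((T.map fun z => w₂ z.2).sum)) :
    Relation.ReflTransGen (MoveP w₁ w₂) S T := by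
  have c1 := H1 (S.map Prod.fst) (T.map Prod.fst)
    (by rw [Multiset.map_map, Multiset.map_map]; exact hA1)
  obtain ⟨S₁, hS₁, hS₁fst, hS₁snd⟩ := stepB1 (w₂ := w₂) c1 S rfl
  have c2 := H2 (S₁.map Prod.snd) (T.map Prod.snd) (by
    rw [hS₁snd, Multiset.map_map, Multiset.map_map]
    exact hA2)
  obtain ⟨S₂, hS₂, hS₂snd, hS₂fst⟩ := stepB2 (w₁ := w₁) c2 S₁ rfl
  have hfin := stepA (w₁ := w₁) (w₂ := w₂) (Multiset.card S₂) S₂ T rfl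
    (by rw [hS₂fst, hS₁fst]) hS₂snd
  exact (hS₁.trans hS₂).trans hfin

end Comb

/-! ### Finsupp/multiset translation -/

lemma deg_eq (u : σ →₀ ℕ) :
    Multiset.card (Finsupp.toMultiset u) = u.sum fun _ e => e :=
  Finsupp.card_toMultiset u

lemma A_toMultiset (w : σ → (τ →₀ ℕ)) (a : σ →₀ ℕ) :
    ((Finsupp.toMultiset a).map w).sum = A w a := by
  induction a using Finsupp.induction with
  | zero => simp
  | single_add s n f hs hn ih =>
    rw [Finsupp.toMultiset_add, Multiset.map_add, Multiset.sum_add, ih, map_add, A_single,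
      Finsupp.toMultiset_single]
    congr 1
    clear hn hs
    induction n with
    | zero => simp
    | succ k ihn =>
      rw [succ_nsmul, Multiset.map_add, Multiset.sum_add, ihn, succ_nsmul]
      simp

lemma toFinsupp_cons [DecidableEq σ] (a : σ) (s : Multiset σ) :
    Multiset.toFinsupp (a ::ₘ s) = Finsupp.single a 1 + Multiset.toFinsupp s := by
  rw [← Multiset.singleton_add, Multiset.toFinsupp_add, Multiset.toFinsupp_singleton]

lemma pair_decomp {u : σ →₀ ℕ} (hu : (u.sum fun _ e => e) = 2) :
    ∃ x y, u = Finsupp.single x 1 + Finsupp.single y 1 ∧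
      Finsupp.toMultiset u = x ::ₘ y ::ₘ 0 := by
  classical
  have h2 : Multiset.card (Finsupp.toMultiset u) = 2 := by rw [deg_eq]; exact hu
  obtain ⟨x, y, hxy⟩ := Multiset.card_eq_two.mp h2
  refine ⟨x, y, ?_, by rw [hxy]; rfl⟩
  have := congrArg Multiset.toFinsupp hxy
  rw [Finsupp.toMultiset_toFinsupp] at this
  rw [this]
  show Multiset.toFinsupp (x ::ₘ y ::ₘ 0) = _
  rw [toFinsupp_cons, toFinsupp_cons]
  simp

lemma A_pair (w : σ → (τ →₀ ℕ)) (x y : σ) :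
    A w (Finsupp.single x 1 + Finsupp.single y 1) = w x + w y := by
  rw [map_add, A_single, A_single, one_smul, one_smul]

lemma moveF_to_move1 (w : σ → (τ →₀ ℕ)) {a b : σ →₀ ℕ} (h : MoveF w a b) :
    Move1 w (Finsupp.toMultiset a) (Finsupp.toMultiset b) := by
  obtain ⟨c, u, v, hu, hv, hA, rfl, rfl⟩ := h
  obtain ⟨x, y, hxyf, hxym⟩ := pair_decomp hu
  obtain ⟨x', y', hxyf', hxym'⟩ := pair_decomp hv
  refine ⟨Finsupp.toMultiset c, x, y, x', y', ?_, ?_, ?_⟩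
  · rw [← A_pair w x y, ← A_pair w x' y', ← hxyf, ← hxyf']
    exact hA
  · rw [Finsupp.toMultiset_add, hxym, add_comm, Multiset.cons_add, Multiset.cons_add,
      zero_add]
  · rw [Finsupp.toMultiset_add, hxym', add_comm, Multiset.cons_add, Multiset.cons_add,
      zero_add]

lemma con_to_move1 [DecidableEq σ] (w : σ → (τ →₀ ℕ)) {m m' : Multiset σ}
    (h : Con w (Multiset.toFinsupp m) (Multiset.toFinsupp m')) :
    Relation.ReflTransGen (Move1 w) m m' := by
  have := Relation.ReflTransGen.lift Finsupp.toMultiset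
    (fun a b hab => moveF_to_move1 w hab) _ _ h
  rwa [Function.onFun, Multiset.toFinsupp_toMultiset, Multiset.toFinsupp_toMultiset] at this

/-! ### Binomials and the kernel -/

lemma binomial_mem_ker (w : σ → (τ →₀ ℕ)) {a b : σ →₀ ℕ} (h : A w a = A w b) :
    (monomial a 1 - monomial b 1 : MvPolynomial σ K) ∈ RingHom.ker (Phi w) := by
  rw [RingHom.mem_ker, map_sub, Phi_monomial, Phi_monomial, h, sub_self]

lemma ker_binomial_A (w : σ → (τ →₀ ℕ)) {a b : σ →₀ ℕ}
    (h : (monomial a 1 - monomial b 1 : MvPolynomial σ K) ∈ RingHom.ker (Phi w)) :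
    A w a = A w b := by
  classical
  by_contra hne
  rw [RingHom.mem_ker, map_sub, Phi_monomial, Phi_monomial, sub_eq_zero] at h
  have := congrArg (coeff (A w a)) h
  rw [coeff_monomial, coeff_monomial, if_pos rfl, if_neg (fun hh => hne hh.symm)] at this
  exact one_ne_zero this

/-- products of variables are monomials -/
lemma prodX {ι : Type} (s : Finset ι) (f : ι → τ) :
    (∏ i ∈ s, (X (f i) : MvPolynomial τ K)) =
      monomial (∑ i ∈ s, Finsupp.single (f i) 1) 1 := by
  classical
  induction s using Finset.induction with
  | empty => simp
  | insert _ _ h ih =>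
    rw [Finset.prod_insert h, Finset.sum_insert h, ih]
    rw [show (X (f _) : MvPolynomial τ K) = monomial (Finsupp.single (f _) 1) 1 from rfl,
      monomial_mul, one_mul]

/-! ### weights for isotonian algebras -/

noncomputable def wgt (P Q : Type) [Preorder P] [Preorder Q] [Fintype P] :
    (P →o Q) → ((P × Q) →₀ ℕ) :=
  fun φ => ∑ p, Finsupp.single (p, φ p) 1

lemma mapDomain_sum_single {ι κ lam : Type} [Fintype ι] (f : κ → lam) (g : ι → κ) :
    Finsupp.mapDomain f (∑ i, Finsupp.single (g i) (1 : ℕ)) =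
      ∑ i, Finsupp.single (f (g i)) 1 := by
  rw [show Finsupp.mapDomain f = ⇑(Finsupp.mapDomain.addMonoidHom f) from rfl, map_sum]
  exact Finset.sum_congr rfl fun i _ => Finsupp.mapDomain_single

end Stmt10

open Stmt10

lemma isotonianMap_eq (K P Q : Type) [Field K] [PartialOrder P] [Fintype P]
    [PartialOrder Q] [Fintype Q] :
    isotonianMap K P Q = Phi (wgt P Q) := by
  unfold isotonianMap Phi
  congr 1
  funext φ
  rw [prodX]
  rfl

/-- the equivalence between isotone maps on the disjoint sum and pairs -/
def sumEquiv (P₁ P₂ Q : Type) [PartialOrder P₁] [PartialOrder P₂] [PartialOrder Q] :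
    ((P₁ ⊕ P₂) →o Q) ≃ ((P₁ →o Q) × (P₂ →o Q)) where
  toFun f := (⟨fun p => f (Sum.inl p), fun a b h => f.monotone (Sum.inl_le_inl_iff.mpr h)⟩,
              ⟨fun p => f (Sum.inr p), fun a b h => f.monotone (Sum.inr_le_inr_iff.mpr h)⟩)
  invFun g := ⟨Sum.elim g.1 g.2, by
    rintro (a | a) (b | b) h
    · exact g.1.monotone (Sum.inl_le_inl_iff.mp h)
    · exact absurd h Sum.not_inl_le_inr
    · exact absurd h Sum.not_inr_le_inl
    · exact g.2.monotone (Sum.inr_le_inr_iff.mp h)⟩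
  left_inv f := by
    apply OrderHom.ext
    funext x
    cases x <;> rfl
  right_inv g := by
    refine Prod.ext ?_ ?_ <;> apply OrderHom.ext <;> rfl

section SumGlue

variable (P₁ P₂ Q : Type) [Fintype P₁] [Fintype P₂]

def iot1 : P₁ × Q → (P₁ ⊕ P₂) × Q := fun pq => (Sum.inl pq.1, pq.2)
def iot2 : P₂ × Q → (P₁ ⊕ P₂) × Q := fun pq => (Sum.inr pq.1, pq.2)

lemma iot1_inj : Function.Injective (iot1 P₁ P₂ Q) := by
  intro a c h
  simp only [iot1, Prod.mk.injEq, Sum.inl.injEq] at h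
  exact Prod.ext h.1 h.2

lemma iot2_inj : Function.Injective (iot2 P₁ P₂ Q) := by
  intro a c h
  simp only [iot2, Prod.mk.injEq, Sum.inr.injEq] at h
  exact Prod.ext h.1 h.2

lemma r1_j1 (x : P₁ × Q →₀ ℕ) :
    Finsupp.comapDomain.addMonoidHom (iot1_inj P₁ P₂ Q)
      (Finsupp.mapDomain (iot1 P₁ P₂ Q) x) = x := by
  ext a
  show Finsupp.comapDomain _ _ _ a = x a
  rw [Finsupp.comapDomain_apply, Finsupp.mapDomain_apply (iot1_inj P₁ P₂ Q)]

lemma r1_j2 (y : P₂ × Q →₀ ℕ) :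
    Finsupp.comapDomain.addMonoidHom (iot1_inj P₁ P₂ Q)
      (Finsupp.mapDomain (iot2 P₁ P₂ Q) y) = 0 := by
  ext a
  show Finsupp.comapDomain _ _ _ a = (0 : P₁ × Q →₀ ℕ) a
  rw [Finsupp.comapDomain_apply, Finsupp.coe_zero, Pi.zero_apply]
  apply Finsupp.mapDomain_notin_range
  rintro ⟨b, hb⟩
  have := congrArg Prod.fst hb
  simp [iot1, iot2] at this

lemma r2_j2 (y : P₂ × Q →₀ ℕ) :
    Finsupp.comapDomain.addMonoidHom (iot2_inj P₁ P₂ Q)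
      (Finsupp.mapDomain (iot2 P₁ P₂ Q) y) = y := by
  ext a
  show Finsupp.comapDomain _ _ _ a = y a
  rw [Finsupp.comapDomain_apply, Finsupp.mapDomain_apply (iot2_inj P₁ P₂ Q)]

lemma r2_j1 (x : P₁ × Q →₀ ℕ) :
    Finsupp.comapDomain.addMonoidHom (iot2_inj P₁ P₂ Q)
      (Finsupp.mapDomain (iot1 P₁ P₂ Q) x) = 0 := by
  ext a
  show Finsupp.comapDomain _ _ _ a = (0 : P₂ × Q →₀ ℕ) a
  rw [Finsupp.comapDomain_apply, Finsupp.coe_zero, Pi.zero_apply]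
  apply Finsupp.mapDomain_notin_range
  rintro ⟨b, hb⟩
  have := congrArg Prod.fst hb
  simp [iot1, iot2] at this

variable [PartialOrder P₁] [PartialOrder P₂] [PartialOrder Q]

lemma wgt_sum_decomp (f : (P₁ ⊕ P₂) →o Q) :
    wgt (P₁ ⊕ P₂) Q f =
      Finsupp.mapDomain (iot1 P₁ P₂ Q) (wgt P₁ Q (sumEquiv P₁ P₂ Q f).1) +
      Finsupp.mapDomain (iot2 P₁ P₂ Q) (wgt P₂ Q (sumEquiv P₁ P₂ Q f).2) := by
  unfold wgt
  rw [Fintype.sum_sum_type, mapDomain_sum_single, mapDomain_sum_single]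
  rfl

end SumGlue

lemma spanGoal_le_spanQB (K P Q : Type) [Field K] [PartialOrder P] [Fintype P]
    [PartialOrder Q] [Fintype Q] :
    Ideal.span {f | f ∈ isotonianIdeal K P Q ∧ IsQuadraticBinomial f} ≤
      Ideal.span (QB K (wgt P Q)) := by
  rw [Ideal.span_le]
  rintro f ⟨hfJ, u, v, hu, hv, rfl⟩
  rw [isotonianIdeal, isotonianMap_eq] at hfJ
  exact Ideal.subset_span ⟨u, v, hu, hv, ker_binomial_A _ hfJ, rfl⟩

lemma QB_sub_goal (K P Q : Type) [Field K] [PartialOrder P] [Fintype P]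
    [PartialOrder Q] [Fintype Q] :
    QB K (wgt P Q) ⊆ {f | f ∈ isotonianIdeal K P Q ∧ IsQuadraticBinomial f} := by
  rintro f ⟨u, v, hu, hv, hA, rfl⟩
  refine ⟨?_, u, v, hu, hv, rfl⟩
  rw [isotonianIdeal, isotonianMap_eq]
  exact binomial_mem_ker _ hA

lemma h_to_H (K P Q : Type) [Field K] [PartialOrder P] [Fintype P]
    [PartialOrder Q] [Fintype Q]
    (h : isotonianIdeal K P Q =
      Ideal.span {f | f ∈ isotonianIdeal K P Q ∧ IsQuadraticBinomial f}) :
    ∀ m m' : Multiset (P →o Q), (m.map (wgt P Q)).sum = (m'.map (wgt P Q)).sum →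
      Relation.ReflTransGen (Move1 (wgt P Q)) m m' := by
  classical
  intro m m' hsum
  have h1 : (monomial (Multiset.toFinsupp m) 1 - monomial (Multiset.toFinsupp m') 1 :
      MvPolynomial (P →o Q) K) ∈ isotonianIdeal K P Q := by
    rw [isotonianIdeal, isotonianMap_eq]
    apply binomial_mem_ker
    rw [← A_toMultiset, ← A_toMultiset, Multiset.toFinsupp_toMultiset,
      Multiset.toFinsupp_toMultiset]
    exact hsum
  rw [h] at h1
  exact con_to_move1 _ (spanQB_con _ (spanGoal_le_spanQB K P Q h1))

lemma main_con (K P₁ P₂ Q : Type) [Field K] [PartialOrder P₁] [Fintype P₁]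
    [PartialOrder P₂] [Fintype P₂] [PartialOrder Q] [Fintype Q]
    (h1 : isotonianIdeal K P₁ Q =
      Ideal.span {f | f ∈ isotonianIdeal K P₁ Q ∧ IsQuadraticBinomial f})
    (h2 : isotonianIdeal K P₂ Q =
      Ideal.span {f | f ∈ isotonianIdeal K P₂ Q ∧ IsQuadraticBinomial f})
    {a b : ((P₁ ⊕ P₂) →o Q) →₀ ℕ}
    (hab : A (wgt (P₁ ⊕ P₂) Q) a = A (wgt (P₁ ⊕ P₂) Q) b) :
    Con (wgt (P₁ ⊕ P₂) Q) a b := by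
  classical
  have e := sumEquiv P₁ P₂ Q
  let w := wgt (P₁ ⊕ P₂) Q
  let w1 := wgt P₁ Q
  let w2 := wgt P₂ Q
  have hwz : ∀ z : (P₁ →o Q) × (P₂ →o Q),
      wgt (P₁ ⊕ P₂) Q ((sumEquiv P₁ P₂ Q).symm z) =
        Finsupp.mapDomain (iot1 P₁ P₂ Q) (wgt P₁ Q z.1) +
        Finsupp.mapDomain (iot2 P₁ P₂ Q) (wgt P₂ Q z.2) := by
    intro z
    have := wgt_sum_decomp P₁ P₂ Q ((sumEquiv P₁ P₂ Q).symm z)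
    rwa [show sumEquiv P₁ P₂ Q ((sumEquiv P₁ P₂ Q).symm z) = z from
      (sumEquiv P₁ P₂ Q).apply_symm_apply z] at this
  have hj1 : ∀ S : Multiset ((P₁ →o Q) × (P₂ →o Q)),
      (S.map fun z => Finsupp.mapDomain (iot1 P₁ P₂ Q) (wgt P₁ Q z.1)).sum =
        Finsupp.mapDomain (iot1 P₁ P₂ Q) ((S.map fun z => wgt P₁ Q z.1).sum) := by
    intro S
    have := (Finsupp.mapDomain.addMonoidHom (iot1 P₁ P₂ Q)).map_multiset_sum
      (S.map fun z => wgt P₁ Q z.1)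
    rw [Multiset.map_map] at this
    exact this.symm
  have hj2 : ∀ S : Multiset ((P₁ →o Q) × (P₂ →o Q)),
      (S.map fun z => Finsupp.mapDomain (iot2 P₁ P₂ Q) (wgt P₂ Q z.2)).sum =
        Finsupp.mapDomain (iot2 P₁ P₂ Q) ((S.map fun z => wgt P₂ Q z.2).sum) := by
    intro S
    have := (Finsupp.mapDomain.addMonoidHom (iot2 P₁ P₂ Q)).map_multiset_sum
      (S.map fun z => wgt P₂ Q z.2)
    rw [Multiset.map_map] at this
    exact this.symm
  have hAdec : ∀ c : ((P₁ ⊕ P₂) →o Q) →₀ ℕ,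
      A (wgt (P₁ ⊕ P₂) Q) c =
        Finsupp.mapDomain (iot1 P₁ P₂ Q)
          ((((Finsupp.toMultiset c).map (sumEquiv P₁ P₂ Q)).map fun z => wgt P₁ Q z.1).sum) +
        Finsupp.mapDomain (iot2 P₁ P₂ Q)
          ((((Finsupp.toMultiset c).map (sumEquiv P₁ P₂ Q)).map fun z => wgt P₂ Q z.2).sum) := by
    intro c
    rw [← A_toMultiset]
    have hmapw : (Finsupp.toMultiset c).map (wgt (P₁ ⊕ P₂) Q)
        = ((Finsupp.toMultiset c).map (sumEquiv P₁ P₂ Q)).map fun z =>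
            Finsupp.mapDomain (iot1 P₁ P₂ Q) (wgt P₁ Q z.1) +
            Finsupp.mapDomain (iot2 P₁ P₂ Q) (wgt P₂ Q z.2) := by
      rw [Multiset.map_map]
      apply Multiset.map_congr rfl
      intro s _
      have := hwz (sumEquiv P₁ P₂ Q s)
      rwa [(sumEquiv P₁ P₂ Q).symm_apply_apply] at this
    rw [hmapw, Multiset.sum_map_add, hj1, hj2]
  have hA1 : ((((Finsupp.toMultiset a).map (sumEquiv P₁ P₂ Q)).map fun z => wgt P₁ Q z.1).sum)
      = ((((Finsupp.toMultiset b).map (sumEquiv P₁ P₂ Q)).map fun z => wgt P₁ Q z.1).sum) := by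
    have h := congrArg (Finsupp.comapDomain.addMonoidHom (iot1_inj P₁ P₂ Q)) hab
    rw [hAdec a, hAdec b, map_add, map_add, r1_j1, r1_j1, r1_j2, r1_j2, add_zero,
      add_zero] at h
    exact h
  have hA2 : ((((Finsupp.toMultiset a).map (sumEquiv P₁ P₂ Q)).map fun z => wgt P₂ Q z.2).sum)
      = ((((Finsupp.toMultiset b).map (sumEquiv P₁ P₂ Q)).map fun z => wgt P₂ Q z.2).sum) := by
    have h := congrArg (Finsupp.comapDomain.addMonoidHom (iot2_inj P₁ P₂ Q)) hab
    rw [hAdec a, hAdec b, map_add, map_add, r2_j1, r2_j1, r2_j2, r2_j2, zero_add,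
      zero_add] at h
    exact h
  have chain := mainComb (w₁ := wgt P₁ Q) (w₂ := wgt P₂ Q)
    (h_to_H K P₁ Q h1) (h_to_H K P₂ Q h2)
    ((Finsupp.toMultiset a).map (sumEquiv P₁ P₂ Q))
    ((Finsupp.toMultiset b).map (sumEquiv P₁ P₂ Q)) hA1 hA2
  -- transport the chain back to exponent vectors
  have hstep : ∀ S T, MoveP (wgt P₁ Q) (wgt P₂ Q) S T →
      MoveF (wgt (P₁ ⊕ P₂) Q)
        (Multiset.toFinsupp (S.map (sumEquiv P₁ P₂ Q).symm))
        (Multiset.toFinsupp (T.map (sumEquiv P₁ P₂ Q).symm)) := by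
    rintro S T ⟨C, x, y, x', y', hw1c, hw2c, rfl, rfl⟩
    refine ⟨Multiset.toFinsupp (C.map (sumEquiv P₁ P₂ Q).symm),
      Finsupp.single ((sumEquiv P₁ P₂ Q).symm x) 1 +
        Finsupp.single ((sumEquiv P₁ P₂ Q).symm y) 1,
      Finsupp.single ((sumEquiv P₁ P₂ Q).symm x') 1 +
        Finsupp.single ((sumEquiv P₁ P₂ Q).symm y') 1, ?_, ?_, ?_, ?_, ?_⟩
    · rw [← deg_eq]
      simp [Finsupp.toMultiset_add]
    · rw [← deg_eq]
      simp [Finsupp.toMultiset_add]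
    · have e1 := congrArg (Finsupp.mapDomain (iot1 P₁ P₂ Q)) hw1c
      have e2 := congrArg (Finsupp.mapDomain (iot2 P₁ P₂ Q)) hw2c
      rw [Finsupp.mapDomain_add, Finsupp.mapDomain_add] at e1 e2
      rw [A_pair, A_pair, hwz, hwz, hwz, hwz, add_add_add_comm, e1, e2]
      exact add_add_add_comm _ _ _ _
    · rw [Multiset.map_cons, Multiset.map_cons, toFinsupp_cons, toFinsupp_cons,
        ← add_assoc]
      exact add_comm _ _
    · rw [Multiset.map_cons, Multiset.map_cons, toFinsupp_cons, toFinsupp_cons,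
        ← add_assoc]
      exact add_comm _ _
  have lifted := Relation.ReflTransGen.lift
    (fun (S : Multiset ((P₁ →o Q) × (P₂ →o Q))) => Multiset.toFinsupp (S.map (sumEquiv P₁ P₂ Q).symm)) hstep _ _ chain
  have hF : ∀ c : ((P₁ ⊕ P₂) →o Q) →₀ ℕ,
      Multiset.toFinsupp (((Finsupp.toMultiset c).map (sumEquiv P₁ P₂ Q)).map
        (sumEquiv P₁ P₂ Q).symm) = c := by
    intro c
    rw [Multiset.map_map]
    rw [show (⇑(sumEquiv P₁ P₂ Q).symm ∘ ⇑(sumEquiv P₁ P₂ Q)) = id from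
      funext fun s => (sumEquiv P₁ P₂ Q).symm_apply_apply s]
    rw [Multiset.map_id, Finsupp.toMultiset_toFinsupp]
  simp only [Function.onFun, hF] at lifted
  exact lifted

theorem statement10 (K P₁ P₂ Q : Type) [Field K] [PartialOrder P₁] [Fintype P₁]
    [PartialOrder P₂] [Fintype P₂] [PartialOrder Q] [Fintype Q]
    (h1 : isotonianIdeal K P₁ Q =
      Ideal.span {f | f ∈ isotonianIdeal K P₁ Q ∧ IsQuadraticBinomial f})
    (h2 : isotonianIdeal K P₂ Q =
      Ideal.span {f | f ∈ isotonianIdeal K P₂ Q ∧ IsQuadraticBinomial f}) :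
    isotonianIdeal K (P₁ ⊕ P₂) Q =
      Ideal.span {f | f ∈ isotonianIdeal K (P₁ ⊕ P₂) Q ∧ IsQuadraticBinomial f} := by
  classical
  refine le_antisymm ?_ (Ideal.span_le.mpr fun f hf => hf.1)
  have hQBle : Ideal.span (QB K (wgt (P₁ ⊕ P₂) Q)) ≤
      Ideal.span {f | f ∈ isotonianIdeal K (P₁ ⊕ P₂) Q ∧ IsQuadraticBinomial f} :=
    Ideal.span_le.mpr fun f hf => Ideal.subset_span (QB_sub_goal K (P₁ ⊕ P₂) Q hf)
  refine le_trans ?_ hQBle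
  intro p hp
  rw [isotonianIdeal, isotonianMap_eq] at hp
  have hspan := ker_le_spanFB (wgt (P₁ ⊕ P₂) Q) p.support.card p rfl hp
  have hFB : FB K (wgt (P₁ ⊕ P₂) Q) ⊆
      ((Ideal.span (QB K (wgt (P₁ ⊕ P₂) Q))).restrictScalars K : Set _) := by
    rintro f ⟨a, b, hab, rfl⟩
    exact con_mem_spanQB _ (main_con K P₁ P₂ Q h1 h2 hab)
  exact Submodule.span_le.mpr hFB hspan
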